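/- Let B ∈ F_2[x] be a perfect polynomial and Q an irreducible divisor of B with Q ∉ {x, x+1}. Then either 1 + Q divides B, or there exists h ≥ 1 such that σ(Q^{2h}) divides B. -/

import Mathlib

open Polynomial Finset

/-- The sum of all monic divisors of a binary polynomial. -/
noncomputable def sigma2 (A : (ZMod 2)[X]) : (ZMod 2)[X] :=
  ∑ᶠ d ∈ {d : (ZMod 2)[X] | d.Monic ∧ d ∣ A}, d

lemma monic_of_ne_zero {d : (ZMod 2)[X]} (hd : d ≠ 0) : d.Monic := by
  have h := Polynomial.leadingCoeff_ne_zero.mpr hd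
  unfold Polynomial.Monic
  revert h
  generalize d.leadingCoeff = a
  revert a
  decide

lemma unit_eq_one (p : (ZMod 2)[X]) (hp : IsUnit p) : p = 1 := by
  obtain ⟨r, hr, rfl⟩ := Polynomial.isUnit_iff.mp hp
  have hr0 : r ≠ 0 := hr.ne_zero
  have key : ∀ a : ZMod 2, a ≠ 0 → a = 1 := by decide
  simp [key r hr0]

instance : Subsingleton (ZMod 2)[X]ˣ :=
  ⟨fun u v => Units.ext (by rw [unit_eq_one u u.isUnit, unit_eq_one v v.isUnit])⟩

noncomputable instance : Fintype (ZMod 2)[X]ˣ := Fintype.ofSubsingleton 1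

lemma divisors_finite (A : (ZMod 2)[X]) (hA : A ≠ 0) :
    {d : (ZMod 2)[X] | d.Monic ∧ d ∣ A}.Finite := by
  have hfin : {d : (ZMod 2)[X] | d ∣ A}.Finite := by
    rw [← Set.finite_coe_iff]
    exact @Finite.of_fintype _ (UniqueFactorizationMonoid.fintypeSubtypeDvd A hA)
  exact Set.Finite.subset hfin (fun d hd => hd.2)

lemma sigma2_eq_sum (A : (ZMod 2)[X]) (hA : A ≠ 0) :
    sigma2 A = ∑ d ∈ (divisors_finite A hA).toFinset, d := by
  have h : {d : (ZMod 2)[X] | d.Monic ∧ d ∣ A} = ↑(divisors_finite A hA).toFinset :=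
    (Set.Finite.coe_toFinset _).symm
  rw [sigma2]
  exact (finsum_mem_congr h fun _ _ => rfl).trans (finsum_mem_coe_finset _ _)

lemma mem_divisors_iff (A : (ZMod 2)[X]) (hA : A ≠ 0) (d : (ZMod 2)[X]) :
    d ∈ (divisors_finite A hA).toFinset ↔ d ∣ A := by
  rw [Set.Finite.mem_toFinset]
  constructor
  · exact fun h => h.2
  · intro h
    exact ⟨monic_of_ne_zero (fun h0 => hA (by simpa [h0] using h)), h⟩

lemma cancel_pow {Q : (ZMod 2)[X]} (hQ : Prime Q) {i j : ℕ} {e e' : (ZMod 2)[X]}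
    (hi : ¬ Q ∣ e) (hj : ¬ Q ∣ e') (hij : i ≤ j) (h : Q ^ i * e = Q ^ j * e') :
    i = j ∧ e = e' := by
  obtain ⟨d, rfl⟩ := Nat.exists_eq_add_of_le hij
  rw [pow_add, mul_assoc] at h
  have he : e = Q ^ d * e' := mul_left_cancel₀ (pow_ne_zero i hQ.ne_zero) h
  rcases Nat.eq_zero_or_pos d with hd | hd
  · subst hd; simp at he; simp [he]
  · exfalso
    apply hi
    rw [he]
    exact Dvd.dvd.mul_right (dvd_pow_self Q hd.ne') e'

lemma sigma2_prime_pow_mul (Q C : (ZMod 2)[X]) (hQ : Prime Q) (hC0 : C ≠ 0)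
    (hQC : ¬ Q ∣ C) (k : ℕ) :
    sigma2 (Q ^ k * C) = (∑ i ∈ Finset.range (k + 1), Q ^ i) * sigma2 C := by
  have hB0 : Q ^ k * C ≠ 0 := mul_ne_zero (pow_ne_zero _ hQ.ne_zero) hC0
  rw [sigma2_eq_sum _ hB0, sigma2_eq_sum _ hC0, Finset.sum_mul_sum, ← Finset.sum_product']
  symm
  apply Finset.sum_bij (i := fun p _ => Q ^ p.1 * p.2)
  · rintro ⟨i, e⟩ hp
    rw [Finset.mem_product, Finset.mem_range, mem_divisors_iff _ hC0] at hp
    rw [mem_divisors_iff _ hB0]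
    exact mul_dvd_mul (pow_dvd_pow Q (Nat.lt_succ_iff.mp hp.1)) hp.2
  · rintro ⟨i, e⟩ hp ⟨j, e'⟩ hq h
    rw [Finset.mem_product, Finset.mem_range, mem_divisors_iff _ hC0] at hp hq
    have hie : ¬ Q ∣ e := fun hd => hQC (hd.trans hp.2)
    have hje : ¬ Q ∣ e' := fun hd => hQC (hd.trans hq.2)
    rcases le_total i j with hij | hij
    · obtain ⟨h1, h2⟩ := cancel_pow hQ hie hje hij h
      simp [h1, h2]
    · obtain ⟨h1, h2⟩ := cancel_pow hQ hje hie hij h.symm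
      simp [h1, h2]
  · intro d hd
    rw [mem_divisors_iff _ hB0] at hd
    have hd0 : d ≠ 0 := fun h0 => hB0 (by simpa [h0] using hd)
    have hfin := FiniteMultiplicity.of_prime_left hQ hd0
    obtain ⟨e, hde, hQe⟩ := hfin.exists_eq_pow_mul_and_not_dvd
    set j := multiplicity Q d with hj
    have hjk : j ≤ k := by
      by_contra hjk
      push_neg at hjk
      have h1 : Q ^ (k + 1) ∣ Q ^ k * C := by
        calc Q ^ (k + 1) ∣ Q ^ j := pow_dvd_pow Q hjk
        _ ∣ d := by rw [hde]; exact Dvd.dvd.mul_right dvd_rfl e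
        _ ∣ Q ^ k * C := hd
      rw [pow_succ] at h1
      exact hQC ((mul_dvd_mul_iff_left (pow_ne_zero k hQ.ne_zero)).mp h1)
    have heC : e ∣ C := by
      have h1 : Q ^ j * e ∣ Q ^ j * (Q ^ (k - j) * C) := by
        rw [← mul_assoc, ← pow_add, Nat.add_sub_cancel' hjk, ← hde]; exact hd
      have h2 : e ∣ Q ^ (k - j) * C :=
        (mul_dvd_mul_iff_left (pow_ne_zero j hQ.ne_zero)).mp h1
      have hcop : IsCoprime (Q ^ (k - j)) e :=
        ((hQ.coprime_iff_not_dvd.mpr hQe).pow_left)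
      exact hcop.symm.dvd_of_dvd_mul_left h2
    refine ⟨⟨j, e⟩, ?_, hde.symm⟩
    rw [Finset.mem_product, Finset.mem_range, mem_divisors_iff _ hC0]
    exact ⟨Nat.lt_succ_of_le hjk, heC⟩
  · intro p hp
    rfl

lemma geom_even (Q : (ZMod 2)[X]) (m : ℕ) :
    ∑ i ∈ Finset.range (2 * m), Q ^ i = (1 + Q) * ∑ j ∈ Finset.range m, Q ^ (2 * j) := by
  induction m with
  | zero => simp
  | succ m ih =>
    have : 2 * (m + 1) = 2 * m + 1 + 1 := by ring
    rw [this, Finset.sum_range_succ, Finset.sum_range_succ, ih, Finset.sum_range_succ]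
    ring

theorem odd_prime_divisor_of_perfect
    (B : (ZMod 2)[X]) (hB0 : B ≠ 0) (hperf : sigma2 B = B)
    (Q : (ZMod 2)[X]) (hQ : Irreducible Q) (hQB : Q ∣ B)
    (hQx : Q ≠ X) (hQx1 : Q ≠ X + 1) :
    (1 + Q) ∣ B ∨ ∃ h : ℕ, 1 ≤ h ∧ (∑ i ∈ Finset.range (2 * h + 1), Q ^ i) ∣ B := by
  have hQp : Prime Q := hQ.prime
  have hfin := FiniteMultiplicity.of_prime_left hQp hB0
  obtain ⟨C, hBC, hQC⟩ := hfin.exists_eq_pow_mul_and_not_dvd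
  set k := multiplicity Q B with hk
  have hk1 : k ≠ 0 := by
    rw [hk]
    exact multiplicity_ne_zero.mpr hQB
  have hC0 : C ≠ 0 := fun h0 => hB0 (by rw [hBC, h0, mul_zero])
  have hsig : sigma2 B = (∑ i ∈ Finset.range (k + 1), Q ^ i) * sigma2 C := by
    rw [hBC]; exact sigma2_prime_pow_mul Q C hQp hC0 hQC k
  have hdvd : (∑ i ∈ Finset.range (k + 1), Q ^ i) ∣ B := by
    rw [← hperf, hsig]; exact Dvd.intro _ rfl
  rcases Nat.even_or_odd k with ⟨h, hh⟩ | ⟨m, hm⟩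
  · right
    refine ⟨h, ?_, ?_⟩
    · omega
    · have : k + 1 = 2 * h + 1 := by omega
      rwa [this] at hdvd
  · left
    have : k + 1 = 2 * (m + 1) := by omega
    rw [this, geom_even] at hdvd
    exact dvd_trans (Dvd.intro _ rfl) hdvd
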